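/- Let M(x) = -x + 1/2 + (1/2)·√(2x² - 10x - 1 + 2(x+2)√(x(x+2))) for real x ≥ 1. Then M is well-defined (the expressions under both square roots are nonnegative for x ≥ 1), M is strictly decreasing on [1,∞), and M(1) < 1/2. -/

import Mathlib

/-- The asymptotic constant `M(x) = -x + 1/2 + (1/2)√(2x²−10x−1+2(x+2)√(x(x+2)))`. -/
noncomputable def asymptM (x : ℝ) : ℝ :=
  -x + 1 / 2 + (1 / 2) * Real.sqrt (2 * x ^ 2 - 10 * x - 1 + 2 * (x + 2) * Real.sqrt (x * (x + 2)))

lemma asymptM_hasDerivAt {x : ℝ} (hx : 1 < x) :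
    HasDerivAt asymptM (-1 + (1/2) * ((4*x - 10 + (2*Real.sqrt (x*(x+2)) +
      2*(x+2)*((2*x+2)/(2*Real.sqrt (x*(x+2)))))) /
      (2 * Real.sqrt (2*x^2-10*x-1+2*(x+2)*Real.sqrt (x*(x+2)))))) x := by
  have hxx : (0:ℝ) < x * (x+2) := by nlinarith
  have hs0 : 0 < Real.sqrt (x*(x+2)) := Real.sqrt_pos.2 hxx
  have hs2 : Real.sqrt (x*(x+2)) ^ 2 = x*(x+2) := Real.sq_sqrt hxx.le
  have hA : (0:ℝ) < 2*x^2-10*x-1+2*(x+2)*Real.sqrt (x*(x+2)) := by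
    nlinarith [sq_nonneg (Real.sqrt (x*(x+2)) - x - 1)]
  have h1 : HasDerivAt (fun y : ℝ => y * (y+2)) (2*x+2) x := by
    have := (hasDerivAt_id x).mul ((hasDerivAt_id x).add_const 2)
    simp only [id_eq] at this
    exact (this.congr_deriv (by ring)).congr_of_eventuallyEq (Filter.Eventually.of_forall fun y => by simp)
  have h2 : HasDerivAt (fun y : ℝ => Real.sqrt (y*(y+2))) ((2*x+2)/(2*Real.sqrt (x*(x+2)))) x :=
    h1.sqrt hxx.ne'
  have h3 : HasDerivAt (fun y : ℝ => 2*y^2-10*y-1+2*(y+2)*Real.sqrt (y*(y+2)))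
      (4*x - 10 + (2*Real.sqrt (x*(x+2)) + 2*(x+2)*((2*x+2)/(2*Real.sqrt (x*(x+2)))))) x := by
    have hp : HasDerivAt (fun y : ℝ => 2*y^2-10*y-1) (4*x-10) x := by
      have := (((hasDerivAt_pow 2 x).const_mul 2).sub ((hasDerivAt_id x).const_mul 10)).sub_const 1
      simp only [id_eq] at this
      exact (this.congr_deriv (by norm_num; ring)).congr_of_eventuallyEq (Filter.Eventually.of_forall fun y => by simp)
    have hq : HasDerivAt (fun y : ℝ => 2*(y+2)*Real.sqrt (y*(y+2)))
        (2*Real.sqrt (x*(x+2)) + 2*(x+2)*((2*x+2)/(2*Real.sqrt (x*(x+2))))) x := by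
      have := (((hasDerivAt_id x).add_const 2).const_mul 2).mul h2
      simp only [id_eq] at this
      exact (this.congr_deriv (by ring)).congr_of_eventuallyEq (Filter.Eventually.of_forall fun y => by simp)
    exact hp.add hq
  have h4 := h3.sqrt hA.ne'
  have h5 := ((hasDerivAt_id x).neg.add_const (1/2 : ℝ)).add (h4.const_mul (1/2 : ℝ))
  exact h5.congr_of_eventuallyEq (Filter.Eventually.of_forall fun y => by simp [asymptM])

lemma asymptM_deriv_neg {x s t : ℝ} (hx : 1 < x) (hs0 : 0 < s) (ht0 : 0 < t)
    (hs2 : s^2 = x*(x+2)) (ht2 : t^2 = 2*x^2-10*x-1+2*(x+2)*s) :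
    -1 + (1/2) * ((4*x - 10 + (2*s + 2*(x+2)*((2*x+2)/(2*s)))) / (2*t)) < 0 := by
  have k1 : 16*x^2+19*x+1 < (16*x+5)*s := by
    have hb : ((16*x+5)*s)^2 - (16*x^2+19*x+1)^2 = (4*x-1)^3 := by
      have : ((16*x+5)*s)^2 = (16*x+5)^2*(x*(x+2)) := by rw [mul_pow, hs2]
      rw [this]; ring
    nlinarith [hb, hs0, sq_nonneg (4*x-1)]
  have hL : 0 < (4*x-10)*s + 2*(x+2)*(2*x+1) := by
    nlinarith [sq_nonneg (s - x - 1), sq_nonneg (2*x-5)]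
  have key : (4*x-10)*s + 2*(x+2)*(2*x+1) < 4*t*s := by
    nlinarith [k1, hL, mul_pos hs0 ht0, sq_nonneg (4*t*s - ((4*x-10)*s + 2*(x+2)*(2*x+1)))]
  have e1 : 4*x - 10 + (2*s + 2*(x+2)*((2*x+2)/(2*s))) = ((4*x-10)*s + 2*(x+2)*(2*x+1))/s := by
    field_simp
    linear_combination 2*hs2
  rw [e1]
  have h2 : ((4*x-10)*s + 2*(x+2)*(2*x+1))/s/(2*t) < 2 := by
    rw [div_div, div_lt_iff₀ (by positivity)]
    nlinarith [key]
  linarith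

/-- `M` is well-defined for `x ≥ 1` (both radicands are nonnegative), strictly decreasing
on `[1,∞)`, and `M(1) < 1/2`. -/
theorem asymptM_properties :
    (∀ x : ℝ, 1 ≤ x → 0 ≤ x * (x + 2) ∧
        0 ≤ 2 * x ^ 2 - 10 * x - 1 + 2 * (x + 2) * Real.sqrt (x * (x + 2))) ∧
      StrictAntiOn asymptM (Set.Ici 1) ∧ asymptM 1 < 1 / 2 := by
  refine ⟨fun x hx => ⟨by nlinarith, ?_⟩, ?_, ?_⟩
  · have hs0 : 0 ≤ Real.sqrt (x * (x + 2)) := Real.sqrt_nonneg _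
    have hs2 : Real.sqrt (x * (x + 2)) ^ 2 = x * (x + 2) := Real.sq_sqrt (by nlinarith)
    nlinarith [sq_nonneg (Real.sqrt (x * (x + 2)) - x - 1),
      sq_nonneg ((x+1)*Real.sqrt (x * (x + 2)) - x^2 - 2*x)]
  · apply strictAntiOn_of_deriv_neg (convex_Ici 1)
    · have : Continuous asymptM := by
        unfold asymptM; fun_prop
      exact this.continuousOn
    · intro x hx
      rw [interior_Ici] at hx
      have hx' : 1 < x := hx
      rw [(asymptM_hasDerivAt hx').deriv]
      have hxx : (0:ℝ) < x * (x+2) := by nlinarith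
      have hs0 : 0 < Real.sqrt (x*(x+2)) := Real.sqrt_pos.2 hxx
      have hs2 : Real.sqrt (x*(x+2)) ^ 2 = x*(x+2) := Real.sq_sqrt hxx.le
      have hA : (0:ℝ) < 2*x^2-10*x-1+2*(x+2)*Real.sqrt (x*(x+2)) := by
        nlinarith [sq_nonneg (Real.sqrt (x*(x+2)) - x - 1), hs2, hs0.le]
      have ht0 : 0 < Real.sqrt (2*x^2-10*x-1+2*(x+2)*Real.sqrt (x*(x+2))) := Real.sqrt_pos.2 hA
      have ht2 : Real.sqrt (2*x^2-10*x-1+2*(x+2)*Real.sqrt (x*(x+2))) ^ 2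
          = 2*x^2-10*x-1+2*(x+2)*Real.sqrt (x*(x+2)) := Real.sq_sqrt hA.le
      exact asymptM_deriv_neg hx' hs0 ht0 hs2 ht2
  · unfold asymptM
    norm_num
    have h3 : Real.sqrt 3 < 13/6 := by
      rw [show (13:ℝ)/6 = Real.sqrt ((13/6)^2) by rw [Real.sqrt_sq (by norm_num)]]
      exact Real.sqrt_lt_sqrt (by norm_num) (by norm_num)
    have h2 : Real.sqrt (-9 + 6 * Real.sqrt 3) < 2 := by
      rw [Real.sqrt_lt' (by norm_num : (0:ℝ) < 2)]
      nlinarith [h3]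
    linarith
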